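/- Let w be any cube-free infinite binary word and let f be the morphism defined by f(0) = 012, f(1) = 0012. Then the ternary word f(w) is (10/3)^+-free and contains at most 5 distinct palindromic factors (including the empty word). -/

import Mathlib

open List

/-- `v` occurs in the infinite word `w` at position `i`. -/
def FactorAt {A : Type} (v : List A) (w : ℕ → A) (i : ℕ) : Prop :=
  v = (List.range v.length).map fun k => w (i + k)

/-- `v` is a (finite) factor of the infinite word `w`. -/
def IsFactorInf {A : Type} (v : List A) (w : ℕ → A) : Prop :=
  ∃ i, FactorAt v w i

/-- `v` is a (finite) factor of the bi-infinite word `w`. -/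
def IsFactorBi {A : Type} (v : List A) (w : ℤ → A) : Prop :=
  ∃ i : ℤ, v = (List.range v.length).map fun k => w (i + k)

/-- `v` is a repetition with period `u`, i.e. `u ≠ ε` and `v` is a prefix of
`u^ω`; its exponent is `|v|/|u|`. -/
def IsRep {A : Type} (v u : List A) : Prop :=
  u ≠ [] ∧ v <+: (List.replicate v.length u).flatten

/-- The infinite word `w` is `β⁺`-free: every factor that is a repetition
with period `u` has exponent at most `β`. -/
def FreePlusInf {A : Type} (β : ℝ) (w : ℕ → A) : Prop :=
  ∀ v u : List A, IsFactorInf v w → IsRep v u → (v.length : ℝ) ≤ β * u.length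

/-- The infinite word `w` is `β`-free: every factor that is a repetition
with period `u` has exponent strictly less than `β`. -/
def FreeInf {A : Type} (β : ℝ) (w : ℕ → A) : Prop :=
  ∀ v u : List A, IsFactorInf v w → IsRep v u → (v.length : ℝ) < β * u.length

/-- The bi-infinite word `w` is `β⁺`-free. -/
def FreePlusBi {A : Type} (β : ℝ) (w : ℤ → A) : Prop :=
  ∀ v u : List A, IsFactorBi v w → IsRep v u → (v.length : ℝ) ≤ β * u.length

/-- The bi-infinite word `w` is `β`-free. -/
def FreeBi {A : Type} (β : ℝ) (w : ℤ → A) : Prop :=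
  ∀ v u : List A, IsFactorBi v w → IsRep v u → (v.length : ℝ) < β * u.length

/-- The finite word `w` is `β⁺`-free. -/
def FreePlusList {A : Type} (β : ℝ) (w : List A) : Prop :=
  ∀ v u : List A, v <:+: w → IsRep v u → (v.length : ℝ) ≤ β * u.length

/-- The infinite word `w` has at most `p` distinct palindromic factors
(including the empty word). -/
def AtMostPalInf {A : Type} (p : ℕ) (w : ℕ → A) : Prop :=
  ∃ S : Finset (List A), S.card ≤ p ∧ ∀ v, IsFactorInf v w → v.reverse = v → v ∈ S

/-- The bi-infinite word `w` has at most `p` distinct palindromic factors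
(including the empty word). -/
def AtMostPalBi {A : Type} (p : ℕ) (w : ℤ → A) : Prop :=
  ∃ S : Finset (List A), S.card ≤ p ∧ ∀ v, IsFactorBi v w → v.reverse = v → v ∈ S

/-- The finite word `w` has at most `p` distinct palindromic factors
(including the empty word). -/
def AtMostPalList {A : Type} (p : ℕ) (w : List A) : Prop :=
  ∃ S : Finset (List A), S.card ≤ p ∧ ∀ v, v <:+: w → v.reverse = v → v ∈ S

/-- The image of the infinite word `w` under the (non-erasing) morphism `f`,
extended letter by letter. -/
def MorphImage {A B : Type} [Inhabited B] (f : A → List B) (w : ℕ → A) : ℕ → B :=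
  fun n => (((List.range (n + 1)).map fun i => f (w i)).flatten).getD n default

/-- The morphism f : 0 ↦ 012, 1 ↦ 0012. -/
def fMor : Fin 2 → List (Fin 3) := ![[0, 1, 2], [0, 0, 1, 2]]

namespace Aux
variable (w : ℕ → Fin 2)

def FL (n : ℕ) : List (Fin 3) := ((List.range n).map fun i => fMor (w i)).flatten
def sig (n : ℕ) : ℕ := (FL w n).length

lemma fin2_cases (a : Fin 2) : a = 0 ∨ a = 1 := by fin_cases a <;> simp

lemma fin3_cases (a : Fin 3) : a = 0 ∨ a = 1 ∨ a = 2 := by fin_cases a <;> simp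

lemma fMor_cases (a : Fin 2) : fMor a = [0,1,2] ∨ fMor a = [0,0,1,2] := by
  fin_cases a <;> simp [fMor]

lemma FL_succ (n : ℕ) : FL w (n+1) = FL w n ++ fMor (w n) := by
  simp [FL, List.range_succ]

lemma sig_succ (n : ℕ) : sig w (n+1) = sig w n + (fMor (w n)).length := by
  simp [sig, FL_succ]

lemma sig_zero : sig w 0 = 0 := by simp [sig, FL]

lemma sig_step (n : ℕ) : (sig w (n+1) = sig w n + 3 ∧ fMor (w n) = [0,1,2]) ∨
    (sig w (n+1) = sig w n + 4 ∧ fMor (w n) = [0,0,1,2]) := by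
  rcases fMor_cases (w n) with h | h
  · left; rw [sig_succ, h]; simp
  · right; rw [sig_succ, h]; simp

lemma sig_mono : StrictMono (sig w) := by
  apply strictMono_nat_of_lt_succ
  intro n
  rcases sig_step w n with ⟨h, _⟩ | ⟨h, _⟩ <;> omega

lemma sig_ge (n : ℕ) : 3 * n ≤ sig w n := by
  induction n with
  | zero => simp [sig_zero]
  | succ n ih => rcases sig_step w n with ⟨h, _⟩ | ⟨h, _⟩ <;> omega

lemma FL_prefix (a b : ℕ) (h : a ≤ b) : FL w a <+: FL w b := by
  induction b with
  | zero => rw [Nat.le_zero.mp h]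
  | succ b ih =>
    rcases Nat.lt_or_ge a (b+1) with h' | h'
    · exact (ih (by omega)).trans ⟨fMor (w b), (FL_succ w b).symm⟩
    · have : a = b + 1 := by omega
      subst this; exact List.prefix_rfl

lemma x_eq (n N : ℕ) (h : n < sig w N) :
    MorphImage fMor w n = (FL w N).getD n 0 := by
  have hn : n < sig w (n+1) := by have := sig_ge w (n+1); omega
  show (FL w (n+1)).getD n default = (FL w N).getD n 0
  rcases Nat.le_total (n+1) N with hle | hle
  · obtain ⟨t, ht⟩ := FL_prefix w (n+1) N hle
    rw [← ht, List.getD_append _ _ _ _ hn]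
    rfl
  · obtain ⟨t, ht⟩ := FL_prefix w N (n+1) hle
    rw [← ht, List.getD_append _ _ _ _ h]
    rfl

lemma x_block (q k : ℕ) (hk : k < (fMor (w q)).length) :
    MorphImage fMor w (sig w q + k) = (fMor (w q)).getD k 0 := by
  have h : sig w q + k < sig w (q+1) := by rw [sig_succ]; omega
  rw [x_eq w _ (q+1) h, FL_succ]
  have hfl : (FL w q).length = sig w q := rfl
  rw [List.getD_append_right _ _ _ _ (by omega : (FL w q).length ≤ sig w q + k)]
  rw [hfl]
  congr 1
  omega

/-- Full block description. -/
lemma blockCases (q : ℕ) :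
    (w q = 0 ∧ sig w (q+1) = sig w q + 3 ∧ MorphImage fMor w (sig w q) = 0 ∧
      MorphImage fMor w (sig w q + 1) = 1 ∧ MorphImage fMor w (sig w q + 2) = 2) ∨
    (w q = 1 ∧ sig w (q+1) = sig w q + 4 ∧ MorphImage fMor w (sig w q) = 0 ∧
      MorphImage fMor w (sig w q + 1) = 0 ∧ MorphImage fMor w (sig w q + 2) = 1 ∧
      MorphImage fMor w (sig w q + 3) = 2) := by
  rcases fin2_cases (w q) with h | h
  · left
    refine ⟨h, ?_, ?_, ?_, ?_⟩
    · rw [sig_succ, h]; simp [fMor]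
    · rw [show sig w q = sig w q + 0 by omega, x_block w q 0 (by simp [h, fMor])]; simp [h, fMor]
    · rw [x_block w q 1 (by simp [h, fMor])]; simp [h, fMor]
    · rw [x_block w q 2 (by simp [h, fMor])]; simp [h, fMor]
  · right
    refine ⟨h, ?_, ?_, ?_, ?_, ?_⟩
    · rw [sig_succ, h]; simp [fMor]
    · rw [show sig w q = sig w q + 0 by omega, x_block w q 0 (by simp [h, fMor])]; simp [h, fMor]
    · rw [x_block w q 1 (by simp [h, fMor])]; simp [h, fMor]
    · rw [x_block w q 2 (by simp [h, fMor])]; simp [h, fMor]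
    · rw [x_block w q 3 (by simp [h, fMor])]; simp [h, fMor]


abbrev x := MorphImage fMor w

lemma loc (n : ℕ) : ∃ q, sig w q ≤ n ∧ n < sig w (q+1) := by
  induction n with
  | zero =>
    refine ⟨0, by simp [sig_zero], ?_⟩
    have h1 := sig_mono w (show 0 < 0+1 by omega)
    have h2 := sig_zero w
    omega
  | succ n ih =>
    obtain ⟨q, h1, h2⟩ := ih
    rcases Nat.lt_or_ge (n+1) (sig w (q+1)) with h | h
    · exact ⟨q, by omega, h⟩
    · refine ⟨q+1, by omega, ?_⟩
      have := sig_mono w (show q+1 < q+1+1 by omega)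
      omega

lemma two_boundary (n : ℕ) (h : x w n = 2) : ∃ q, n + 1 = sig w (q+1) := by
  obtain ⟨q, h1, h2⟩ := loc w n
  rcases blockCases w q with ⟨_, hs, a0, a1, a2⟩ | ⟨_, hs, a0, a1, a2, a3⟩
  · have : n = sig w q ∨ n = sig w q + 1 ∨ n = sig w q + 2 := by omega
    rcases this with h' | h' | h' <;> subst h' <;> simp_all
    exact ⟨q, by omega⟩
  · have : n = sig w q ∨ n = sig w q + 1 ∨ n = sig w q + 2 ∨ n = sig w q + 3 := by omega
    rcases this with h' | h' | h' | h' <;> subst h' <;> simp_all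
    exact ⟨q, by omega⟩

lemma block_end (q : ℕ) : x w (sig w (q+1) - 1) = 2 := by
  rcases blockCases w q with ⟨_, hs, a0, a1, a2⟩ | ⟨_, hs, a0, a1, a2, a3⟩
  · rw [show sig w (q+1) - 1 = sig w q + 2 by omega]; exact a2
  · rw [show sig w (q+1) - 1 = sig w q + 3 by omega]; exact a3

lemma det (a b : ℕ) (h : x w (sig w a + 1) = x w (sig w b + 1)) : w a = w b := by
  rcases blockCases w a with ⟨ha, _, _, ha1, _⟩ | ⟨ha, _, _, ha1, _, _⟩ <;>
    rcases blockCases w b with ⟨hb, _, _, hb1, _⟩ | ⟨hb, _, _, hb1, _, _⟩ <;>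
      rw [ha, hb] <;> simp_all

lemma pair (n : ℕ) :
    (x w n = 0 ∧ x w (n+1) = 0) ∨ (x w n = 0 ∧ x w (n+1) = 1) ∨
    (x w n = 1 ∧ x w (n+1) = 2) ∨ (x w n = 2 ∧ x w (n+1) = 0) := by
  obtain ⟨q, h1, h2⟩ := loc w n
  have hnext : x w (sig w (q+1)) = 0 := by
    rcases blockCases w (q+1) with ⟨_, _, a0, _⟩ | ⟨_, _, a0, _⟩ <;> exact a0
  rcases blockCases w q with ⟨_, hs, a0, a1, a2⟩ | ⟨_, hs, a0, a1, a2, a3⟩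
  · have : n = sig w q ∨ n = sig w q + 1 ∨ n = sig w q + 2 := by omega
    rcases this with h' | h' | h' <;> subst h'
    · right; left; exact ⟨a0, a1⟩
    · right; right; left; exact ⟨a1, a2⟩
    · right; right; right
      refine ⟨a2, ?_⟩
      rw [show sig w q + 2 + 1 = sig w (q+1) by omega]
      exact hnext
  · have : n = sig w q ∨ n = sig w q + 1 ∨ n = sig w q + 2 ∨ n = sig w q + 3 := by omega
    rcases this with h' | h' | h' | h' <;> subst h'
    · left; exact ⟨a0, a1⟩
    · right; left; exact ⟨a1, a2⟩
    · right; right; left; exact ⟨a2, a3⟩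
    · right; right; right
      refine ⟨a3, ?_⟩
      rw [show sig w q + 3 + 1 = sig w (q+1) by omega]
      exact hnext

lemma t00 (n : ℕ) (h0 : x w n = 0) (h1 : x w (n+1) = 0) : x w (n+2) = 1 := by
  obtain ⟨q, hq1, hq2⟩ := loc w n
  rcases blockCases w q with ⟨_, hs, a0, a1, a2⟩ | ⟨_, hs, a0, a1, a2, a3⟩
  · have : n = sig w q ∨ n = sig w q + 1 ∨ n = sig w q + 2 := by omega
    rcases this with h' | h' | h' <;> subst h' <;> simp_all
  · have : n = sig w q ∨ n = sig w q + 1 ∨ n = sig w q + 2 ∨ n = sig w q + 3 := by omega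
    rcases this with h' | h' | h' | h' <;> subst h' <;> simp_all


lemma window_factor (s n : ℕ) : IsFactorInf ((List.range n).map fun k => w (s+k)) w := by
  refine ⟨s, ?_⟩
  unfold FactorAt
  simp

lemma cube (hcf : ∀ u : List (Fin 2), u ≠ [] → ¬ IsFactorInf (u ++ u ++ u) w)
    (s m : ℕ) (hm : 1 ≤ m) (hper : ∀ k, k < 2*m → w (s+k) = w (s+k+m)) : False := by
  set u : List (Fin 2) := (List.range m).map fun k => w (s+k) with hu_def
  have hu : u.length = m := by simp [hu_def]
  have huj : ∀ j (h : j < m), u[j]'(by omega) = w (s+j) := by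
    intro j h
    simp [hu_def]
  have key : u ++ u ++ u = (List.range (3*m)).map fun k => w (s+k) := by
    apply List.ext_getElem (by simp [hu]; omega)
    intro j h1 h2
    have h3 : j < 3*m := by simp [hu] at h1; omega
    rw [List.getElem_map, List.getElem_range]
    rcases Nat.lt_or_ge j m with hj | hj
    · rw [List.getElem_append_left (by simp [hu]; omega : j < (u++u).length),
        List.getElem_append_left (by omega : j < u.length)]
      exact huj j hj
    rcases Nat.lt_or_ge j (2*m) with hj2 | hj2
    · rw [List.getElem_append_left (by simp [hu]; omega : j < (u++u).length),
        List.getElem_append_right (by omega : u.length ≤ j)]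
      rw [huj (j - u.length) (by omega)]
      rw [hu]
      have := hper (j - m) (by omega)
      rw [show s + (j-m) + m = s + j by omega] at this
      exact this
    · rw [List.getElem_append_right (by simp [hu]; omega : (u++u).length ≤ j)]
      have hj3 : j - (u++u).length = j - 2*m := by simp [hu]; omega
      rw [huj (j - (u++u).length) (by simp [hu]; omega)]
      have e1 := hper (j - 2*m) (by omega)
      have e2 := hper (j - m) (by omega)
      rw [show s + (j - 2*m) + m = s + (j - m) by omega] at e1
      rw [show s + (j - m) + m = s + j by omega] at e2
      rw [hj3, e1, e2]
  refine hcf u (by intro h; rw [h] at hu; simp at hu; omega) ⟨s, ?_⟩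
  unfold FactorAt
  have hlen : (u ++ u ++ u).length = 3*m := by simp [hu]; ring
  rw [hlen]
  exact key


lemma sig_step_lo (n : ℕ) : sig w n + 3 ≤ sig w (n+1) := by
  rcases sig_step w n with ⟨h, _⟩ | ⟨h, _⟩ <;> omega

lemma sig_step_hi (n : ℕ) : sig w (n+1) ≤ sig w n + 4 := by
  rcases sig_step w n with ⟨h, _⟩ | ⟨h, _⟩ <;> omega

lemma sig_add_lo (s m : ℕ) : sig w s + 3*m ≤ sig w (s+m) := by
  induction m with
  | zero => simp
  | succ k ih =>
    have e2 := sig_step_lo w (s+k)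
    rw [show s + (k+1) = (s+k)+1 by omega]
    omega

lemma partC (hcf : ∀ u : List (Fin 2), u ≠ [] → ¬ IsFactorInf (u ++ u ++ u) w)
    (i l p : ℕ) (hp : 1 ≤ p) (hl : 3*p + 3 ≤ l)
    (hper : ∀ n, i ≤ n → n + p < i + l → x w n = x w (n+p)) : False := by
  have hex : ∃ q, i + 1 ≤ sig w q := ⟨i+1, by have := sig_ge w (i+1); omega⟩
  set s := Nat.find hex with hs_def
  have hbs : i + 1 ≤ sig w s := Nat.find_spec hex
  have hs1 : 1 ≤ s := by
    by_contra h
    have hs0 : s = 0 := by omega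
    rw [hs0, sig_zero] at hbs
    omega
  have hss : s - 1 + 1 = s := by omega
  have hprev : ¬ (i + 1 ≤ sig w (s-1)) := Nat.find_min hex (by omega)
  have hb4 : sig w s ≤ i + 4 := by
    have := sig_step_hi w (s-1)
    rw [hss] at this
    omega
  have hxb : x w (sig w s - 1) = 2 := by
    have := block_end w (s-1)
    rwa [hss] at this
  -- transfer the boundary at sig s
  have h2 : x w (sig w s - 1 + p) = 2 := by
    rw [← hper (sig w s - 1) (by omega) (by omega)]
    exact hxb
  obtain ⟨q', hq'⟩ := two_boundary w _ h2
  have hs'eq : sig w (q'+1) = sig w s + p := by omega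
  have hlt : s < q' + 1 := by
    have := (sig_mono w).lt_iff_lt (a := s) (b := q'+1)
    omega
  set m := q' + 1 - s with hm_def
  have hm : 1 ≤ m := by omega
  have hsm : sig w (s+m) = sig w s + p := by
    rw [show s + m = q' + 1 by omega]
    exact hs'eq
  have hp3 : 3*m ≤ p := by
    have h2 := sig_add_lo w s m
    omega
  -- the chain lemma
  have chain : ∀ k, sig w (s+k) + p ≤ i + l → sig w (s+k+m) = sig w (s+k) + p := by
    intro k
    induction k with
    | zero =>
      intro _
      simpa using hsm
    | succ k ih =>
      intro hcond
      have hk1 : s + (k+1) = (s+k)+1 := by omega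
      rw [hk1] at hcond ⊢
      have hmono : sig w (s+k) < sig w (s+k+1) := sig_mono w (by omega)
      have ihh := ih (by omega)
      have hbe : x w (sig w (s+k+1) - 1) = 2 := block_end w (s+k)
      have hgeb : sig w s ≤ sig w (s+k+1) := (sig_mono w).monotone (by omega)
      have hge1 : 1 ≤ sig w (s+k+1) := by omega
      have htr : x w (sig w (s+k+1) - 1 + p) = 2 := by
        rw [← hper (sig w (s+k+1) - 1) (by omega) (by omega)]
        exact hbe
      obtain ⟨r, hr⟩ := two_boundary w _ htr
      have hr' : sig w (r+1) = sig w (s+k+1) + p := by omega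
      have hrlow : s + k + m < r + 1 := by
        have := (sig_mono w).lt_iff_lt (a := s+k+m) (b := r+1)
        omega
      have hgoal : r + 1 = s + k + 1 + m := by
        by_contra hne
        have hmid : s + k + m + 1 < r + 1 := by omega
        have hd1 : sig w (s+k+m+1) < sig w (r+1) := sig_mono w (by omega)
        have hd2 : sig w (s+k+m) < sig w (s+k+m+1) := sig_mono w (by omega)
        set d := sig w (s+k+m+1) with hd_def
        have hde : x w (d - 1) = 2 := block_end w (s+k+m)
        have hmono2 : sig w s ≤ sig w (s+k) := (sig_mono w).monotone (by omega)
        have hdlo : sig w (s+k) + p < d := by omega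
        have hback : x w (d - 1 - p) = 2 := by
          rw [hper (d - 1 - p) (by omega) (by omega)]
          rw [show d - 1 - p + p = d - 1 by omega]
          exact hde
        obtain ⟨e, he⟩ := two_boundary w _ hback
        have he' : sig w (e+1) = d - p := by omega
        have c1 : s + k < e + 1 := by
          have := (sig_mono w).lt_iff_lt (a := s+k) (b := e+1)
          omega
        have c2 : e + 1 < s + k + 1 := by
          have := (sig_mono w).lt_iff_lt (a := e+1) (b := s+k+1)
          omega
        omega
      rw [show s + k + 1 + m = r + 1 by omega, hr']
  -- bound sig w (s+k) for k ≤ 2m-1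
  have hbound : ∀ k, k ≤ 2*m - 1 → sig w (s+k) ≤ i + 2*p + 1 := by
    intro k hk
    rcases Nat.le_total k m with hkm | hkm
    · have : sig w (s+k) ≤ sig w (s+m) := (sig_mono w).monotone (by omega)
      omega
    · have hm1 : m - 1 + 1 = m := by omega
      have e1 : sig w (s+(m-1)) ≤ sig w (s+m) - 3 := by
        have := sig_step_lo w (s+(m-1))
        rw [show s+(m-1)+1 = s+m by omega] at this
        omega
      have e2 : sig w (s+(k-m)) ≤ sig w (s+(m-1)) := (sig_mono w).monotone (by omega)
      have e3 := chain (k-m) (by omega)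
      rw [show s+(k-m)+m = s+k by omega] at e3
      omega
  -- conclude with a cube in w
  apply cube w hcf s m hm
  intro k hk
  have hσk : sig w (s+k) ≤ i + 2*p + 1 := hbound k (by omega)
  have hc := chain k (by omega)
  apply det w
  rw [hc]
  have := hper (sig w (s+k) + 1) (by have : sig w s ≤ sig w (s+k) := (sig_mono w).monotone (by omega); omega) (by omega)
  rw [show sig w (s+k) + 1 + p = sig w (s+k) + p + 1 by omega] at this
  exact this


set_option maxRecDepth 100000 in
lemma small_check : ∀ g : Fin 7 → Fin 2,
    (∀ a ∈ Finset.range 7, ∀ m ∈ Finset.Icc 1 2, a + 3*m ≤ 7 →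
      ¬ (((List.ofFn g).drop (a+m)).take (2*m) = ((List.ofFn g).drop a).take (2*m))) →
    ∀ p ∈ Finset.Icc 1 5, ∀ a ∈ Finset.range 4,
      ¬ (a + (10*p/3+1) ≤ (((List.ofFn g).map fMor).flatten).length ∧
        ((((List.ofFn g).map fMor).flatten).drop (a+p)).take (10*p/3+1-p) =
        ((((List.ofFn g).map fMor).flatten).drop a).take (10*p/3+1-p)) := by
  decide

lemma FL_split (q t : ℕ) :
    FL w (q+t) = FL w q ++ ((List.range t).map fun r => fMor (w (q+r))).flatten := by
  induction t with
  | zero => simp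
  | succ t ih =>
    rw [show q + (t+1) = (q+t) + 1 by omega, FL_succ, ih, List.range_succ]
    simp

lemma partD (hcf : ∀ u : List (Fin 2), u ≠ [] → ¬ IsFactorInf (u ++ u ++ u) w)
    (i l p : ℕ) (hp : 1 ≤ p) (hp5 : p ≤ 5) (hL : 10*p/3+1 ≤ l)
    (hper : ∀ n, i ≤ n → n + p < i + l → x w n = x w (n+p)) : False := by
  set L := 10*p/3+1 with hL_def
  have hL17 : L ≤ 17 := by interval_cases p <;> simp [hL_def]
  obtain ⟨q, hq1, hq2⟩ := loc w i
  have hstep := sig_step_hi w q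
  set a := i - sig w q with ha_def
  have ha : a ≤ 3 := by omega
  set G : List (Fin 3) := ((List.range 7).map fun r => fMor (w (q+r))).flatten with hG_def
  have hsplit := FL_split w q 7
  have hGlen : sig w (q+7) = sig w q + G.length := by
    have : (FL w (q+7)).length = (FL w q ++ G).length := by rw [hsplit]
    simpa [sig] using this
  have hG21 : 21 ≤ G.length := by
    have := sig_add_lo w q 7
    omega
  have hxG : ∀ j (hj : j < G.length), x w (sig w q + j) = G[j]'hj := by
    intro j hj
    show MorphImage fMor w (sig w q + j) = G[j]'hj
    rw [x_eq w _ (q+7) (by omega), hsplit]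
    rw [List.getD_append_right _ _ _ _ (by exact Nat.le_add_right (sig w q) j : (FL w q).length ≤ sig w q + j)]
    have he : sig w q + j - (FL w q).length = j := by
      show sig w q + j - sig w q = j
      omega
    rw [he, List.getD_eq_getElem _ _ hj]
  set g : Fin 7 → Fin 2 := fun j => w (q + (j : ℕ)) with hg_def
  have hofn : ((List.ofFn g).map fMor).flatten = G := by
    have h : List.ofFn g = (List.range 7).map fun r => w (q+r) := by
      apply List.ext_getElem (by simp)
      intro j h1 h2
      simp only [List.getElem_ofFn, List.getElem_map, List.getElem_range]
      rfl
    rw [h, hG_def, List.map_map]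
    rfl
  have hcfg : ∀ a' ∈ Finset.range 7, ∀ m ∈ Finset.Icc 1 2, a' + 3*m ≤ 7 →
      ¬ (((List.ofFn g).drop (a'+m)).take (2*m) = ((List.ofFn g).drop a').take (2*m)) := by
    intro a' ha' m hm hsum heq
    simp only [Finset.mem_Icc] at hm
    simp only [Finset.mem_range] at ha'
    apply cube w hcf (q+a') m hm.1
    intro k hk
    have hk1 : k < (((List.ofFn g).drop (a'+m)).take (2*m)).length := by
      simp only [List.length_take, List.length_drop, List.length_ofFn]
      omega
    have hk2 : k < (((List.ofFn g).drop a').take (2*m)).length := by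
      simp only [List.length_take, List.length_drop, List.length_ofFn]
      omega
    have h2 : (((List.ofFn g).drop (a'+m)).take (2*m)).getD k 0 =
        (((List.ofFn g).drop a').take (2*m)).getD k 0 := by rw [heq]
    rw [List.getD_eq_getElem _ _ hk1, List.getD_eq_getElem _ _ hk2] at h2
    simp only [List.getElem_take, List.getElem_drop, List.getElem_ofFn] at h2
    have e1 : w (q + (a'+m+k)) = w (q + (a'+k)) := h2
    rw [show q+a'+k+m = q + (a'+m+k) by omega, show q+a'+k = q + (a'+k) by omega]
    exact e1.symm
  have hsc := small_check g hcfg p (by simp [Finset.mem_Icc]; omega) a (by simp; omega)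
  apply hsc
  rw [hofn]
  constructor
  · omega
  · apply List.ext_getElem (by simp only [List.length_take, List.length_drop]; omega)
    intro j h1 h2
    have hj : j < L - p := by
      simp only [List.length_take, List.length_drop] at h1
      omega
    simp only [List.getElem_take, List.getElem_drop]
    have e1 : a + p + j < G.length := by omega
    have e2 : a + j < G.length := by omega
    rw [← hxG _ e1, ← hxG _ e2]
    rw [show sig w q + (a+p+j) = i + j + p by omega, show sig w q + (a+j) = i + j by omega]
    exact (hper (i+j) (by omega) (by omega)).symm

lemma repLen {α : Type} (n : ℕ) (u : List α) :
    (List.replicate n u).flatten.length = n * u.length := by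
  induction n with
  | zero => simp
  | succ k ih => rw [List.replicate_succ, List.flatten_cons]; simp [ih]; ring

lemma freeness (hcf : ∀ u : List (Fin 2), u ≠ [] → ¬ IsFactorInf (u ++ u ++ u) w) :
    FreePlusInf (10/3) (MorphImage fMor w) := by
  intro v u hfac hrep
  obtain ⟨i, hfa⟩ := hfac
  obtain ⟨hu, hpref⟩ := hrep
  have hp : 1 ≤ u.length := List.length_pos_iff.mpr hu
  by_contra hgt
  rw [not_le] at hgt
  have h2 : 10 * u.length < 3 * v.length := by
    have h1 : (10:ℝ) * u.length < 3 * v.length := by linarith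
    exact_mod_cast h1
  -- period of v transferred to x
  obtain ⟨t, ht⟩ := hpref
  have hvk : ∀ k, k + u.length < v.length → v.getD (k + u.length) 0 = v.getD k 0 := by
    intro k hk
    obtain ⟨n, hn⟩ : ∃ n, v.length = n + 1 := ⟨v.length - 1, by omega⟩
    have hF1 : (List.replicate v.length u).flatten = u ++ (List.replicate n u).flatten := by
      rw [hn, List.replicate_succ, List.flatten_cons]
    have hF2 : (List.replicate v.length u).flatten = (List.replicate n u).flatten ++ u := by
      rw [hn, List.replicate_succ', List.flatten_append]
      simp
    have hkn : k < n * u.length := by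
      have h1 : k < n := by omega
      have h2 : n ≤ n * u.length := Nat.le_mul_of_pos_right n (by omega)
      omega
    have e1 : v.getD (k + u.length) 0 = ((List.replicate v.length u).flatten).getD (k + u.length) 0 := by
      rw [← ht, List.getD_append _ _ _ _ hk]
    have e2 : v.getD k 0 = ((List.replicate v.length u).flatten).getD k 0 := by
      rw [← ht, List.getD_append _ _ _ _ (by omega)]
    have e3 : ((List.replicate v.length u).flatten).getD (k + u.length) 0 =
        ((List.replicate n u).flatten).getD k 0 := by
      rw [hF1, List.getD_append_right _ _ _ _ (by omega)]
      congr 1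
      omega
    have e4 : ((List.replicate v.length u).flatten).getD k 0 =
        ((List.replicate n u).flatten).getD k 0 := by
      rw [hF2, List.getD_append _ _ _ _ (by rw [repLen]; exact hkn)]
    rw [e1, e2, e3, e4]
  have hvx : ∀ k, k < v.length → v.getD k 0 = x w (i+k) := by
    intro k hk
    conv_lhs => rw [hfa]
    rw [List.getD_eq_getElem _ _ (by simpa using hk)]
    simp
  have hxper : ∀ n, i ≤ n → n + u.length < i + v.length → x w n = x w (n + u.length) := by
    intro n hn1 hn2
    have e1 := hvx (n - i) (by omega)
    have e2 := hvx (n - i + u.length) (by omega)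
    have e3 := hvk (n - i) (by omega)
    rw [show i + (n - i) = n by omega] at e1
    rw [show i + (n - i + u.length) = n + u.length by omega] at e2
    rw [← e1, ← e2, e3]
  rcases le_or_gt (3 * u.length + 3) v.length with hbig | hsmall
  · exact partC w hcf i v.length u.length hp hbig hxper
  · have hp5 : u.length ≤ 5 := by omega
    have hL : 10 * u.length / 3 + 1 ≤ v.length := by omega
    exact partD w hcf i v.length u.length hp hp5 hL hxper

lemma palindromes : AtMostPalInf 5 (MorphImage fMor w) := by
  refine ⟨{[], [0], [1], [2], [0,0]}, by decide, ?_⟩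
  rintro v ⟨i, hfa⟩ hpal
  have hvx : ∀ k, k < v.length → v.getD k 0 = x w (i+k) := by
    intro k hk
    conv_lhs => rw [hfa]
    rw [List.getD_eq_getElem _ _ (by simpa using hk)]
    simp
  have hpalg : ∀ k, k < v.length → v.getD k 0 = v.getD (v.length - 1 - k) 0 := by
    intro k hk
    have e0 : v.getD k 0 = v.reverse.getD k 0 := congrArg (fun t => t.getD k 0) hpal.symm
    rw [e0, List.getD_eq_getElem _ _ (by simpa using hk), List.getElem_reverse,
      List.getD_eq_getElem _ _ (by omega)]
  match v, hfa, hvx, hpalg with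
  | [], _, _, _ => decide
  | [c], hfa, hvx, hpalg =>
    have e := hvx 0 (by simp)
    simp at e
    rcases fin3_cases (x w i) with h | h | h <;> rw [e, h] <;> decide
  | [c,d], hfa, hvx, hpalg =>
    have e0 := hvx 0 (by simp)
    have e1 := hvx 1 (by simp)
    simp at e0 e1
    have hcd : c = d := by
      have := hpalg 0 (by simp)
      simpa using this
    have hx : x w i = x w (i+1) := by rw [← e0, ← e1]; exact hcd
    rcases pair w i with ⟨u1,u2⟩|⟨u1,u2⟩|⟨u1,u2⟩|⟨u1,u2⟩
    · rw [e0, e1, u1, u2]; decide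
    · rw [u1, u2] at hx; exact absurd hx (by decide)
    · rw [u1, u2] at hx; exact absurd hx (by decide)
    · rw [u1, u2] at hx; exact absurd hx (by decide)
  | c::d::e::rest, hfa, hvx, hpalg =>
    exfalso
    set v' := c::d::e::rest with hv'
    have hl3 : 3 ≤ v'.length := by simp [hv']
    have E2 : x w (i + (v'.length - 1)) = x w i := by
      have t1 := hvx 0 (by omega)
      have t2 := hvx (v'.length - 1) (by omega)
      have t3 := hpalg 0 (by omega)
      rw [show v'.length - 1 - 0 = v'.length - 1 by omega] at t3
      rw [show i + 0 = i by omega] at t1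
      exact t2.symm.trans (t3.symm.trans t1)
    have E1 : x w (i + (v'.length - 2)) = x w (i + 1) := by
      have t1 := hvx 1 (by omega)
      have t2 := hvx (v'.length - 2) (by omega)
      have t3 := hpalg 1 (by omega)
      rw [show v'.length - 1 - 1 = v'.length - 2 by omega] at t3
      exact t2.symm.trans (t3.symm.trans t1)
    have E3 : x w (i + (v'.length - 3)) = x w (i + 2) := by
      have t1 := hvx 2 (by omega)
      have t2 := hvx (v'.length - 3) (by omega)
      have t3 := hpalg 2 (by omega)
      rw [show v'.length - 1 - 2 = v'.length - 3 by omega] at t3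
      exact t2.symm.trans (t3.symm.trans t1)
    have P1 := pair w i
    have P2 := pair w (i + (v'.length - 2))
    rw [show i + (v'.length - 2) + 1 = i + (v'.length - 1) by omega, E1, E2] at P2
    have hab : x w i = 0 ∧ x w (i+1) = 0 := by
      rcases P1 with ⟨u1,u2⟩|⟨u1,u2⟩|⟨u1,u2⟩|⟨u1,u2⟩ <;>
        rcases P2 with ⟨u3,u4⟩|⟨u3,u4⟩|⟨u3,u4⟩|⟨u3,u4⟩ <;>
        first
          | exact ⟨u1, u2⟩
          | exact absurd (u1.symm.trans u4) (by decide)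
          | exact absurd (u2.symm.trans u3) (by decide)
    have P3 := pair w (i + 1)
    rw [show i + 1 + 1 = i + 2 by omega] at P3
    have P4 := pair w (i + (v'.length - 3))
    rw [show i + (v'.length - 3) + 1 = i + (v'.length - 2) by omega, E3, E1] at P4
    have hc : x w (i+2) = 0 := by
      rcases P3 with ⟨u1,u2⟩|⟨u1,u2⟩|⟨u1,u2⟩|⟨u1,u2⟩ <;>
        rcases P4 with ⟨u3,u4⟩|⟨u3,u4⟩|⟨u3,u4⟩|⟨u3,u4⟩ <;>
        first
          | exact u2
          | exact absurd (hab.2.symm.trans u1) (by decide)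
          | exact absurd (hab.2.symm.trans u4) (by decide)
          | exact absurd (u2.symm.trans u3) (by decide)
    have ht := t00 w i hab.1 hab.2
    rw [hc] at ht
    exact absurd ht (by decide)

end Aux

/-- For any cube-free infinite binary word `w`, the ternary word `f(w)` is
`(10/3)⁺`-free and contains at most 5 distinct palindromic factors
(including the empty word). -/
theorem stmt7 (w : ℕ → Fin 2)
    (hcf : ∀ u : List (Fin 2), u ≠ [] → ¬ IsFactorInf (u ++ u ++ u) w) :
    FreePlusInf (10 / 3) (MorphImage fMor w) ∧
    AtMostPalInf 5 (MorphImage fMor w) := by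
  exact ⟨Aux.freeness w hcf, Aux.palindromes w⟩
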